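/- Let a < b, α, β ∈ (0,1), μ ∈ ℂ, d ≥ 1, and let L(x,v) : ℝ^d × ℂ^d → ℂ be an admissible Lagrangian, continuously differentiable in x, satisfying the Legendre property: there is a continuously differentiable map f : ℝ^d × ℂ^d → ℂ^d with ∂L/∂v(x, f(x,p)) = p and f(x, ∂L/∂v(x,v)) = v for all x, p, v. Define the Hamiltonian H(x,p) = p·f(x,p) − L(x, f(x,p)). Let x : [a,b] → ℝ^d with D^{α,β}_μ x continuous, set p(t) = ∂L/∂v(x(t), D^{α,β}_μ x(t)), and assume D^{β,α}_{−μ} p exists. Then x satisfies the fractional Euler–Lagrange equation D^{β,α}_{−μ}[ ∂L/∂v(x, D^{α,β}_μ x) ](t) = ∂L/∂x(x(t), D^{α,β}_μ x(t)) on (a,b) if and only if the pair (x, p) satisfies the fractional Hamiltonian system: D^{α,β}_μ x(t) = ∂H/∂p(x(t), p(t)) and D^{β,α}_{−μ} p(t) = −∂H/∂x(x(t), p(t)) on (a,b). -/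

import Mathlib

open MeasureTheory intervalIntegral

/-- Left Riemann–Liouville derivative of order `α ∈ (0,1)` of a complex-valued function:
`(ₐD_t^α x)(t) = (1/Γ(1−α)) (d/dt) ∫_a^t (t−s)^(−α) x(s) ds`. -/
noncomputable def RLlC (a α : ℝ) (x : ℝ → ℂ) (t : ℝ) : ℂ :=
  (Real.Gamma (1 - α))⁻¹ • deriv (fun τ => ∫ s in a..τ, ((τ - s) ^ (-α) : ℝ) • x s) t

/-- Right Riemann–Liouville derivative of order `α ∈ (0,1)` of a complex-valued function:
`(ₜD_b^α x)(t) = −(1/Γ(1−α)) (d/dt) ∫_t^b (s−t)^(−α) x(s) ds`. -/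
noncomputable def RLrC (b α : ℝ) (x : ℝ → ℂ) (t : ℝ) : ℂ :=
  -((Real.Gamma (1 - α))⁻¹ • deriv (fun τ => ∫ s in τ..b, ((s - τ) ^ (-α) : ℝ) • x s) t)

/-- The fractional operator of order `(α,β)` with parameter `μ`:
`D^{α,β}_μ x = (1/2)(ₐD_t^α x − ₜD_b^β x) + (iμ/2)(ₐD_t^α x + ₜD_b^β x)`. -/
noncomputable def Dfrac (a b α β : ℝ) (μ : ℂ) (x : ℝ → ℂ) : ℝ → ℂ := fun t =>
  (1 / 2 : ℂ) * (RLlC a α x t - RLrC b β x t)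
    + Complex.I * μ / 2 * (RLlC a α x t + RLrC b β x t)

/-- Existence of the left RL derivative of order `α` and of the right RL derivative of
order `β` on `(a,b)`. -/
def HasRLpair (a b α β : ℝ) (x : ℝ → ℂ) : Prop :=
  (∀ t ∈ Set.Ioo a b,
    DifferentiableAt ℝ (fun τ => ∫ s in a..τ, ((τ - s) ^ (-α) : ℝ) • x s) t) ∧
  (∀ t ∈ Set.Ioo a b,
    DifferentiableAt ℝ (fun τ => ∫ s in τ..b, ((s - τ) ^ (-β) : ℝ) • x s) t)

/-- The fractional operator applied componentwise to a real vector-valued function. -/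
noncomputable def DfracV {d : ℕ} (a b α β : ℝ) (μ : ℂ) (x : ℝ → Fin d → ℝ)
    (t : ℝ) (i : Fin d) : ℂ :=
  Dfrac a b α β μ (fun s => ((x s i : ℝ) : ℂ)) t

section AuxHam
open Function

noncomputable def mulCLMr (c : ℂ) : ℝ →L[ℝ] ℂ :=
  ContinuousLinearMap.smulRight (1 : ℝ →L[ℝ] ℝ) c
noncomputable def mulCLMc (c : ℂ) : ℂ →L[ℝ] ℂ :=
  (ContinuousLinearMap.smulRight (1 : ℂ →L[ℂ] ℂ) c).restrictScalars ℝ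
@[simp] lemma mulCLMr_apply (c : ℂ) (r : ℝ) : mulCLMr c r = r • c := rfl
@[simp] lemma mulCLMc_apply (c z : ℂ) : mulCLMc c z = z * c := rfl
lemma mulCLMr_sub (a b : ℂ) : mulCLMr a - mulCLMr b = mulCLMr (a - b) := by ext r; simp [smul_sub]
lemma mulCLMc_sub (a b : ℂ) : mulCLMc a - mulCLMc b = mulCLMc (a - b) := by ext z; simp [mul_sub]
lemma norm_mulCLMr (a : ℂ) : ‖mulCLMr a‖ = ‖a‖ := by
  rw [mulCLMr, ContinuousLinearMap.norm_smulRight_apply]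
  simp [ContinuousLinearMap.one_def, ContinuousLinearMap.norm_id]
lemma norm_mulCLMc (a : ℂ) : ‖mulCLMc a‖ = ‖a‖ := by
  rw [mulCLMc, ContinuousLinearMap.norm_restrictScalars, ContinuousLinearMap.norm_smulRight_apply]
  simp [ContinuousLinearMap.one_def, ContinuousLinearMap.norm_id]
lemma seg_norm_le {E : Type*} [NormedAddCommGroup E] [NormedSpace ℝ E] {x y z : E}
    (hz : z ∈ segment ℝ x y) : ‖z - x‖ ≤ ‖y - x‖ := by
  obtain ⟨s, t, hs, ht, hst, rfl⟩ := hz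
  have h : s • x + t • y - x = t • (y - x) := by
    have hs1 : s = 1 - t := by linarith
    rw [hs1]; module
  rw [h, norm_smul]
  have : ‖(t : ℝ)‖ ≤ 1 := by rw [Real.norm_eq_abs, abs_of_nonneg ht]; linarith
  nlinarith [norm_nonneg (y - x)]

lemma seg_pi_dist {E : Type*} [NormedAddCommGroup E] [NormedSpace ℝ E] {d : ℕ}
    {Y Y₀ Y₁ : Fin d → E} (h : ∀ j, Y j ∈ segment ℝ (Y₀ j) (Y₁ j)) :
    dist Y Y₀ ≤ dist Y₁ Y₀ := by
  rw [dist_pi_le_iff dist_nonneg]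
  intro j
  calc dist (Y j) (Y₀ j) = ‖Y j - Y₀ j‖ := dist_eq_norm _ _
    _ ≤ ‖Y₁ j - Y₀ j‖ := seg_norm_le (h j)
    _ = dist (Y₁ j) (Y₀ j) := (dist_eq_norm _ _).symm
    _ ≤ dist Y₁ Y₀ := dist_le_pi_dist _ _ j

lemma tele {E : Type*} [NormedAddCommGroup E] [NormedSpace ℝ E] {d : ℕ}
    (h : (Fin d → E) → ℂ) (D : (Fin d → E) → Fin d → E →L[ℝ] ℂ) (D₀ : Fin d → E →L[ℝ] ℂ)
    (Y₀ Y₁ : Fin d → E) (ε : ℝ)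
    (hpart : ∀ Y : Fin d → E, (∀ j, Y j ∈ segment ℝ (Y₀ j) (Y₁ j)) →
      ∀ i, HasFDerivAt (fun z => h (Function.update Y i z)) (D Y i) (Y i))
    (hclose : ∀ Y, (∀ j, Y j ∈ segment ℝ (Y₀ j) (Y₁ j)) → ∀ i, ‖D Y i - D₀ i‖ ≤ ε) :
    ‖h Y₁ - h Y₀ - ∑ i, D₀ i (Y₁ i - Y₀ i)‖ ≤ ε * ∑ i, ‖Y₁ i - Y₀ i‖ := by
  classical
  have key : ∀ s : Finset (Fin d),
      ‖h (fun j => if j ∈ s then Y₁ j else Y₀ j) - h Y₀ - ∑ i ∈ s, D₀ i (Y₁ i - Y₀ i)‖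
        ≤ ε * ∑ i ∈ s, ‖Y₁ i - Y₀ i‖ := by
    intro s
    induction s using Finset.induction_on with
    | empty => simp
    | @insert a s ha IH =>
      set A : Fin d → E := fun j => if j ∈ s then Y₁ j else Y₀ j with hA
      have hεnn : 0 ≤ ε := le_trans (norm_nonneg _)
        (hclose Y₀ (fun j => left_mem_segment ℝ _ _) a)
      have hins : (fun j => if j ∈ insert a s then Y₁ j else Y₀ j) = Function.update A a (Y₁ a) := by
        funext j
        by_cases hj : j = a
        · subst hj; simp [hA, Function.update_self]
        · simp [hA, Function.update_apply, hj, Finset.mem_insert]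
      have hAa : A = Function.update A a (Y₀ a) := by
        funext j
        by_cases hj : j = a
        · subst hj; simp [hA, ha]
        · simp [Function.update_apply, hj]
      have hmem : ∀ z ∈ segment ℝ (Y₀ a) (Y₁ a),
          ∀ j, (Function.update A a z) j ∈ segment ℝ (Y₀ j) (Y₁ j) := by
        intro z hz j
        by_cases hj : j = a
        · subst hj; simpa using hz
        · rw [Function.update_apply, if_neg hj, hA]
          by_cases hjs : j ∈ s
          · simp only [hjs, if_true]; exact right_mem_segment ℝ _ _
          · simp only [hjs, if_false]; exact left_mem_segment ℝ _ _
      have seg : ‖h (Function.update A a (Y₁ a)) - h (Function.update A a (Y₀ a))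
          - (D₀ a) (Y₁ a - Y₀ a)‖ ≤ ε * ‖Y₁ a - Y₀ a‖ := by
        refine (convex_segment (Y₀ a) (Y₁ a)).norm_image_sub_le_of_norm_hasFDerivWithin_le'
          (f := fun z => h (Function.update A a z))
          (f' := fun z => D (Function.update A a z) a) (φ := D₀ a) ?_ ?_
          (left_mem_segment ℝ _ _) (right_mem_segment ℝ _ _)
        · intro z hz
          have hp := hpart _ (hmem z hz) a
          have hfun : (fun z' => h (Function.update (Function.update A a z) a z'))
              = fun z' => h (Function.update A a z') := by
            funext z'; rw [Function.update_idem]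
          rw [hfun, Function.update_self] at hp
          exact hp.hasFDerivWithinAt
        · intro z hz
          exact hclose _ (hmem z hz) a
      rw [hins, Finset.sum_insert ha, Finset.sum_insert ha]
      have hdecomp : h (Function.update A a (Y₁ a)) - h Y₀
          - (D₀ a (Y₁ a - Y₀ a) + ∑ i ∈ s, D₀ i (Y₁ i - Y₀ i))
          = (h (Function.update A a (Y₁ a)) - h (Function.update A a (Y₀ a))
              - D₀ a (Y₁ a - Y₀ a))
            + (h A - h Y₀ - ∑ i ∈ s, D₀ i (Y₁ i - Y₀ i)) := by
        rw [← hAa]; ring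
      rw [hdecomp, mul_add]
      exact le_trans (norm_add_le _ _) (add_le_add seg IH)
  have := key Finset.univ
  simpa using this


lemma hasFDerivAt_of_partials {d : ℕ} (g : (Fin d → ℝ) → (Fin d → ℂ) → ℂ)
    (gx gv : (Fin d → ℝ) → (Fin d → ℂ) → Fin d → ℂ)
    (hgx : ∀ X V i, HasDerivAt (fun s : ℝ => g (Function.update X i s) V) (gx X V i) (X i))
    (hgv : ∀ X V i, HasDerivAt (fun z : ℂ => g X (Function.update V i z)) (gv X V i) (V i))
    (hgxC : Continuous fun q : (Fin d → ℝ) × (Fin d → ℂ) => gx q.1 q.2)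
    (hgvC : Continuous fun q : (Fin d → ℝ) × (Fin d → ℂ) => gv q.1 q.2)
    (X : Fin d → ℝ) (V : Fin d → ℂ) :
    HasFDerivAt (fun q : (Fin d → ℝ) × (Fin d → ℂ) => g q.1 q.2)
      ((∑ i, (mulCLMr (gx X V i)).comp ((ContinuousLinearMap.proj i).comp
          (ContinuousLinearMap.fst ℝ (Fin d → ℝ) (Fin d → ℂ))))
        + (∑ i, (mulCLMc (gv X V i)).comp ((ContinuousLinearMap.proj i).comp
          (ContinuousLinearMap.snd ℝ (Fin d → ℝ) (Fin d → ℂ))))) (X, V) := by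
  refine HasFDerivAt.of_isLittleO (Asymptotics.isLittleO_iff.mpr ?_)
  intro c hc
  set ε : ℝ := c / (2 * d + 1) with hεdef
  have hεpos : 0 < ε := by positivity
  obtain ⟨δ₁, hδ₁pos, hδ₁⟩ := Metric.continuous_iff.mp hgxC (X, V) ε hεpos
  obtain ⟨δ₂, hδ₂pos, hδ₂⟩ := Metric.continuous_iff.mp hgvC (X, V) ε hεpos
  have hδpos : 0 < min δ₁ δ₂ := lt_min hδ₁pos hδ₂pos
  filter_upwards [Metric.ball_mem_nhds (X, V) hδpos]
  intro q hq
  rw [Metric.mem_ball, Prod.dist_eq, max_lt_iff] at hq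
  obtain ⟨hdX, hdV⟩ := hq
  -- Bracket 1 : vary X with second argument fixed at q.2
  have hB1 : ‖g q.1 q.2 - g X q.2 - ∑ i, mulCLMr (gx X V i) (q.1 i - X i)‖
      ≤ ε * ∑ i : Fin d, ‖q.1 i - X i‖ := by
    refine tele (fun Y => g Y q.2) (fun Y i => mulCLMr (gx Y q.2 i))
      (fun i => mulCLMr (gx X V i)) X q.1 ε ?_ ?_
    · intro Y _ i
      exact (hgx Y q.2 i).hasFDerivAt
    · intro Y hY i
      rw [mulCLMr_sub, norm_mulCLMr]
      have h1 : dist (Y, q.2) (X, V) < δ₁ := by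
        rw [Prod.dist_eq, max_lt_iff]
        refine ⟨lt_of_le_of_lt (seg_pi_dist hY) (lt_of_lt_of_le hdX (min_le_left _ _)), ?_⟩
        exact lt_of_lt_of_le hdV (min_le_left _ _)
      calc ‖gx Y q.2 i - gx X V i‖ = dist (gx Y q.2 i) (gx X V i) := (dist_eq_norm _ _).symm
        _ ≤ dist (gx Y q.2) (gx X V) := dist_le_pi_dist _ _ i
        _ ≤ ε := le_of_lt (hδ₁ (Y, q.2) h1)
  -- Bracket 2 : vary V with first argument fixed at X
  have hB2 : ‖g X q.2 - g X V - ∑ i, mulCLMc (gv X V i) (q.2 i - V i)‖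
      ≤ ε * ∑ i : Fin d, ‖q.2 i - V i‖ := by
    refine tele (fun W => g X W) (fun W i => mulCLMc (gv X W i))
      (fun i => mulCLMc (gv X V i)) V q.2 ε ?_ ?_
    · intro W _ i
      exact ((hgv X W i).hasFDerivAt).restrictScalars ℝ
    · intro W hW i
      rw [mulCLMc_sub, norm_mulCLMc]
      have h1 : dist ((X, W) : (Fin d → ℝ) × (Fin d → ℂ)) (X, V) < δ₂ := by
        rw [Prod.dist_eq, max_lt_iff]
        refine ⟨by simpa [dist_self] using hδ₂pos, ?_⟩
        exact lt_of_le_of_lt (seg_pi_dist hW) (lt_of_lt_of_le hdV (min_le_right _ _))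
      calc ‖gv X W i - gv X V i‖ = dist (gv X W i) (gv X V i) := (dist_eq_norm _ _).symm
        _ ≤ dist (gv X W) (gv X V) := dist_le_pi_dist _ _ i
        _ ≤ ε := le_of_lt (hδ₂ (X, W) h1)
  have Tapp : ((∑ i, (mulCLMr (gx X V i)).comp ((ContinuousLinearMap.proj i).comp
          (ContinuousLinearMap.fst ℝ (Fin d → ℝ) (Fin d → ℂ))))
        + (∑ i, (mulCLMc (gv X V i)).comp ((ContinuousLinearMap.proj i).comp
          (ContinuousLinearMap.snd ℝ (Fin d → ℝ) (Fin d → ℂ))))) (q - (X, V))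
      = (∑ i, mulCLMr (gx X V i) (q.1 i - X i)) + ∑ i, mulCLMc (gv X V i) (q.2 i - V i) := by
    simp [ContinuousLinearMap.sum_apply, ContinuousLinearMap.comp_apply,
      ContinuousLinearMap.proj_apply, Prod.fst_sub, Prod.snd_sub, Pi.sub_apply]
  have hdecomp : g q.1 q.2 - g X V
      - ((∑ i, (mulCLMr (gx X V i)).comp ((ContinuousLinearMap.proj i).comp
          (ContinuousLinearMap.fst ℝ (Fin d → ℝ) (Fin d → ℂ))))
        + (∑ i, (mulCLMc (gv X V i)).comp ((ContinuousLinearMap.proj i).comp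
          (ContinuousLinearMap.snd ℝ (Fin d → ℝ) (Fin d → ℂ))))) (q - (X, V))
      = (g q.1 q.2 - g X q.2 - ∑ i, mulCLMr (gx X V i) (q.1 i - X i))
        + (g X q.2 - g X V - ∑ i, mulCLMc (gv X V i) (q.2 i - V i)) := by
    rw [Tapp]; ring
  have hqn : ∀ i : Fin d, ‖q.1 i - X i‖ ≤ ‖q - (X, V)‖ := by
    intro i
    calc ‖q.1 i - X i‖ = ‖(q - (X, V)).1 i‖ := by simp
      _ ≤ ‖(q - (X, V)).1‖ := norm_le_pi_norm _ i
      _ ≤ ‖q - (X, V)‖ := norm_fst_le _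
  have hqn2 : ∀ i : Fin d, ‖q.2 i - V i‖ ≤ ‖q - (X, V)‖ := by
    intro i
    calc ‖q.2 i - V i‖ = ‖(q - (X, V)).2 i‖ := by simp
      _ ≤ ‖(q - (X, V)).2‖ := norm_le_pi_norm _ i
      _ ≤ ‖q - (X, V)‖ := norm_snd_le _
  have hs1 : ∑ i : Fin d, ‖q.1 i - X i‖ ≤ d * ‖q - (X, V)‖ := by
    calc ∑ i : Fin d, ‖q.1 i - X i‖ ≤ ∑ _i : Fin d, ‖q - (X, V)‖ :=
          Finset.sum_le_sum (fun i _ => hqn i)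
      _ = d * ‖q - (X, V)‖ := by simp [Finset.sum_const, nsmul_eq_mul]
  have hs2 : ∑ i : Fin d, ‖q.2 i - V i‖ ≤ d * ‖q - (X, V)‖ := by
    calc ∑ i : Fin d, ‖q.2 i - V i‖ ≤ ∑ _i : Fin d, ‖q - (X, V)‖ :=
          Finset.sum_le_sum (fun i _ => hqn2 i)
      _ = d * ‖q - (X, V)‖ := by simp [Finset.sum_const, nsmul_eq_mul]
  rw [hdecomp]
  have hnn : (0:ℝ) ≤ ‖q - (X, V)‖ := norm_nonneg _
  have hεc : ε * (2 * d + 1) = c := by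
    rw [hεdef]; field_simp
  calc ‖(g q.1 q.2 - g X q.2 - ∑ i, mulCLMr (gx X V i) (q.1 i - X i))
        + (g X q.2 - g X V - ∑ i, mulCLMc (gv X V i) (q.2 i - V i))‖
      ≤ ‖g q.1 q.2 - g X q.2 - ∑ i, mulCLMr (gx X V i) (q.1 i - X i)‖
        + ‖g X q.2 - g X V - ∑ i, mulCLMc (gv X V i) (q.2 i - V i)‖ := norm_add_le _ _
    _ ≤ ε * ∑ i : Fin d, ‖q.1 i - X i‖ + ε * ∑ i : Fin d, ‖q.2 i - V i‖ := add_le_add hB1 hB2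
    _ ≤ ε * (d * ‖q - (X, V)‖) + ε * (d * ‖q - (X, V)‖) := by
        exact add_le_add (mul_le_mul_of_nonneg_left hs1 hεpos.le)
          (mul_le_mul_of_nonneg_left hs2 hεpos.le)
    _ ≤ c * ‖q - (X, V)‖ := by nlinarith

lemma hasDerivAt_curve {d : ℕ} (g : (Fin d → ℝ) → (Fin d → ℂ) → ℂ)
    (gx gv : (Fin d → ℝ) → (Fin d → ℂ) → Fin d → ℂ)
    (hgx : ∀ X V i, HasDerivAt (fun s : ℝ => g (Function.update X i s) V) (gx X V i) (X i))
    (hgv : ∀ X V i, HasDerivAt (fun z : ℂ => g X (Function.update V i z)) (gv X V i) (V i))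
    (hgxC : Continuous fun q : (Fin d → ℝ) × (Fin d → ℂ) => gx q.1 q.2)
    (hgvC : Continuous fun q : (Fin d → ℝ) × (Fin d → ℂ) => gv q.1 q.2)
    {XX : ℝ → Fin d → ℝ} {VV : ℝ → Fin d → ℂ} {X' : Fin d → ℝ} {V' : Fin d → ℂ} {t : ℝ}
    (hX : HasDerivAt XX X' t) (hV : HasDerivAt VV V' t) :
    HasDerivAt (fun s => g (XX s) (VV s))
      ((∑ i, gx (XX t) (VV t) i * (X' i : ℂ)) + ∑ i, gv (XX t) (VV t) i * V' i) t := by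
  have h := (hasFDerivAt_of_partials g gx gv hgx hgv hgxC hgvC (XX t) (VV t)).comp_hasDerivAt t
    (hX.prodMk hV)
  convert h using 1
  · rfl
  · rfl
  simp only [ContinuousLinearMap.add_apply, ContinuousLinearMap.coe_sum',
    Finset.sum_apply, ContinuousLinearMap.comp_apply, ContinuousLinearMap.proj_apply,
    ContinuousLinearMap.coe_fst', ContinuousLinearMap.coe_snd', mulCLMr_apply, mulCLMc_apply]
  congr 1
  · exact Finset.sum_congr rfl fun i _ => by rw [Complex.real_smul, mul_comm]
  · exact Finset.sum_congr rfl fun i _ => mul_comm _ _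

section Ham

variable {d : ℕ}
  (L : (Fin d → ℝ) → (Fin d → ℂ) → ℂ)
  (Lx Lv : (Fin d → ℝ) → (Fin d → ℂ) → Fin d → ℂ)
  (hLx : ∀ X V i, HasDerivAt (fun s : ℝ => L (Function.update X i s) V) (Lx X V i) (X i))
  (hLv : ∀ X V i, HasDerivAt (fun z : ℂ => L X (Function.update V i z)) (Lv X V i) (V i))
  (hLxC : Continuous fun q : (Fin d → ℝ) × (Fin d → ℂ) => Lx q.1 q.2)
  (hLvC : Continuous fun q : (Fin d → ℝ) × (Fin d → ℂ) => Lv q.1 q.2)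
  (f : (Fin d → ℝ) → (Fin d → ℂ) → Fin d → ℂ)
  (hfC1 : ContDiff ℝ 1 fun q : (Fin d → ℝ) × (Fin d → ℂ) => f q.1 q.2)
  (hLeg1 : ∀ X P, Lv X (f X P) = P)
  (H : (Fin d → ℝ) → (Fin d → ℂ) → ℂ)
  (hH : ∀ X P, H X P = (∑ i, P i * f X P i) - L X (f X P))

include hLx hLv hLxC hLvC hfC1 hLeg1 hH

lemma Hp_eq_f (Hp : (Fin d → ℝ) → (Fin d → ℂ) → Fin d → ℂ)
    (hHp : ∀ X P i, HasDerivAt (fun z : ℂ => H X (Function.update P i z)) (Hp X P i) (P i))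
    (X : Fin d → ℝ) (P : Fin d → ℂ) (i : Fin d) : Hp X P i = f X P i := by
  classical
  set e : Fin d → ℂ := fun j => if j = i then 1 else 0 with he
  set PP : ℝ → Fin d → ℂ := fun t j => P j + t • e j with hPP
  have hPP0 : PP 0 = P := by funext j; simp [hPP]
  have hPPd : HasDerivAt PP e 0 := by
    rw [hasDerivAt_pi]
    intro j
    simpa [hPP] using ((hasDerivAt_id (0:ℝ)).smul_const (e j)).const_add (P j)
  have hPPup : ∀ t : ℝ, PP t = Function.update P i (P i + t) := by
    intro t; funext j
    by_cases hj : j = i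
    · subst hj; simp [hPP, he, Complex.real_smul]
    · simp [hPP, he, hj, Function.update_apply]
  set F : ℝ → Fin d → ℂ := fun t => f X (PP t) with hF
  have hFd : DifferentiableAt ℝ F 0 := by
    have h1 : DifferentiableAt ℝ (fun q : (Fin d → ℝ) × (Fin d → ℂ) => f q.1 q.2) (X, PP 0) :=
      (hfC1.differentiable one_ne_zero) _
    exact h1.comp (f := fun t => (X, PP t)) 0 ((differentiableAt_const X).prodMk hPPd.differentiableAt)
  set F' : Fin d → ℂ := deriv F 0 with hF'
  have hFdd : HasDerivAt F F' 0 := hFd.hasDerivAt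
  have hFj : ∀ j, HasDerivAt (fun t => F t j) (F' j) 0 := fun j => hasDerivAt_pi.mp hFdd j
  have hF0 : F 0 = f X P := by rw [hF]; simp [hPP0]
  -- way 1
  have hc : HasDerivAt (fun t : ℝ => P i + (t : ℂ)) (1 : ℂ) 0 := by
    simpa using (Complex.ofRealCLM.hasDerivAt (x := (0:ℝ))).const_add (P i)
  have hway1 : HasDerivAt (fun t : ℝ => H X (PP t)) (Hp X P i) 0 := by
    have h1 : HasDerivAt ((fun z : ℂ => H X (Function.update P i z)) ∘ (fun t : ℝ => P i + (t : ℂ)))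
        ((1 : ℂ) • Hp X P i) 0 :=
      HasDerivAt.scomp (0:ℝ) (by simpa using hHp X P i) hc
    have h2 : (fun t : ℝ => H X (PP t))
        = (fun z : ℂ => H X (Function.update P i z)) ∘ (fun t : ℝ => P i + (t : ℂ)) := by
      funext t; simp [Function.comp, hPPup t]
    rw [h2]
    simpa using h1
  -- way 2
  have hsum : HasDerivAt (fun t => ∑ j, PP t j * F t j)
      (∑ j, (e j * F 0 j + PP 0 j * F' j)) 0 :=
    HasDerivAt.fun_sum (fun j _ => (hasDerivAt_pi.mp hPPd j).mul (hFj j))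
  have hXc : HasDerivAt (fun _ : ℝ => X) (0 : Fin d → ℝ) 0 := hasDerivAt_const 0 X
  have hLcurve : HasDerivAt (fun t => L X (F t))
      ((∑ j, Lx X (F 0) j * ((0 : Fin d → ℝ) j : ℂ)) + ∑ j, Lv X (F 0) j * F' j) 0 :=
    hasDerivAt_curve L Lx Lv hLx hLv hLxC hLvC hXc hFdd
  have hway2 : HasDerivAt (fun t : ℝ => H X (PP t)) (f X P i) 0 := by
    have heq : (fun t : ℝ => H X (PP t))
        = fun t => (∑ j, PP t j * F t j) - L X (F t) := by
      funext t; rw [hH]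
    rw [heq]
    have := hsum.sub hLcurve
    convert this using 1
    · rfl
    · rfl
    rw [hF0, hPP0, hLeg1, Finset.sum_add_distrib]
    simp [he, ite_mul]
  exact hway1.unique hway2

lemma Hx_eq_negLx (Hx : (Fin d → ℝ) → (Fin d → ℂ) → Fin d → ℂ)
    (hHx : ∀ X P i, HasDerivAt (fun s : ℝ => H (Function.update X i s) P) (Hx X P i) (X i))
    (X : Fin d → ℝ) (P : Fin d → ℂ) (i : Fin d) : Hx X P i = -(Lx X (f X P) i) := by
  classical
  set er : Fin d → ℝ := fun j => if j = i then 1 else 0 with her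
  set XX : ℝ → Fin d → ℝ := fun t j => X j + t • er j with hXX
  have hXX0 : XX 0 = X := by funext j; simp [hXX]
  have hXXd : HasDerivAt XX er 0 := by
    rw [hasDerivAt_pi]
    intro j
    simpa [hXX] using ((hasDerivAt_id (0:ℝ)).smul_const (er j)).const_add (X j)
  have hXXup : ∀ t : ℝ, XX t = Function.update X i (X i + t) := by
    intro t; funext j
    by_cases hj : j = i
    · subst hj; simp [hXX, her]
    · simp [hXX, her, hj, Function.update_apply]
  set F : ℝ → Fin d → ℂ := fun t => f (XX t) P with hF
  have hFd : DifferentiableAt ℝ F 0 := by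
    have h1 : DifferentiableAt ℝ (fun q : (Fin d → ℝ) × (Fin d → ℂ) => f q.1 q.2) (XX 0, P) :=
      (hfC1.differentiable one_ne_zero) _
    exact h1.comp 0 (hXXd.differentiableAt.prodMk (differentiableAt_const P))
  set F' : Fin d → ℂ := deriv F 0 with hF'
  have hFdd : HasDerivAt F F' 0 := hFd.hasDerivAt
  have hFj : ∀ j, HasDerivAt (fun t => F t j) (F' j) 0 := fun j => hasDerivAt_pi.mp hFdd j
  have hF0 : F 0 = f X P := by rw [hF]; simp [hXX0]
  -- way 1
  have hc : HasDerivAt (fun t : ℝ => X i + t) (1 : ℝ) 0 := by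
    simpa using (hasDerivAt_id (0:ℝ)).const_add (X i)
  have hway1 : HasDerivAt (fun t : ℝ => H (XX t) P) (Hx X P i) 0 := by
    have h1 : HasDerivAt ((fun s : ℝ => H (Function.update X i s) P) ∘ (fun t : ℝ => X i + t))
        ((1 : ℝ) • Hx X P i) 0 :=
      HasDerivAt.scomp (0:ℝ) (by simpa using hHx X P i) hc
    have h2 : (fun t : ℝ => H (XX t) P)
        = (fun s : ℝ => H (Function.update X i s) P) ∘ (fun t : ℝ => X i + t) := by
      funext t; simp [Function.comp, hXXup t]
    rw [h2]
    simpa using h1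
  -- way 2
  have hsum : HasDerivAt (fun t => ∑ j, P j * F t j) (∑ j, P j * F' j) 0 :=
    HasDerivAt.fun_sum (fun j _ => (hFj j).const_mul (P j))
  have hLcurve : HasDerivAt (fun t => L (XX t) (F t))
      ((∑ j, Lx (XX 0) (F 0) j * ((er j : ℝ) : ℂ)) + ∑ j, Lv (XX 0) (F 0) j * F' j) 0 :=
    hasDerivAt_curve L Lx Lv hLx hLv hLxC hLvC hXXd hFdd
  have hway2 : HasDerivAt (fun t : ℝ => H (XX t) P) (-(Lx X (f X P) i)) 0 := by
    have heq : (fun t : ℝ => H (XX t) P)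
        = fun t => (∑ j, P j * F t j) - L (XX t) (F t) := by
      funext t; rw [hH]
    rw [heq]
    have hder := hsum.sub hLcurve
    convert hder using 1
    · rfl
    · rfl
    rw [hF0, hXX0, hLeg1]
    have hLxsum : (∑ j, Lx X (f X P) j * ((er j : ℝ) : ℂ)) = Lx X (f X P) i := by
      simp [her, apply_ite, mul_ite, mul_one, mul_zero]
    rw [hLxsum]
    ring
  exact hway1.unique hway2

end Ham

end AuxHam

theorem stmt11 {a b : ℝ} (hab : a < b) {α β : ℝ}
    (hα : α ∈ Set.Ioo (0 : ℝ) 1) (hβ : β ∈ Set.Ioo (0 : ℝ) 1) (μ : ℂ)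
    {d : ℕ} (hd : 1 ≤ d)
    (L : (Fin d → ℝ) → (Fin d → ℂ) → ℂ)
    (Lx Lv : (Fin d → ℝ) → (Fin d → ℂ) → Fin d → ℂ)
    (hLx : ∀ X V i, HasDerivAt (fun s : ℝ => L (Function.update X i s) V) (Lx X V i) (X i))
    (hLv : ∀ X V i, HasDerivAt (fun z : ℂ => L X (Function.update V i z)) (Lv X V i) (V i))
    (hLxC : Continuous fun q : (Fin d → ℝ) × (Fin d → ℂ) => Lx q.1 q.2)
    (hLvC : Continuous fun q : (Fin d → ℝ) × (Fin d → ℂ) => Lv q.1 q.2)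
    (hLreal : ∀ (X : Fin d → ℝ) (V : Fin d → ℝ), (L X fun i => ((V i : ℝ) : ℂ)).im = 0)
    (f : (Fin d → ℝ) → (Fin d → ℂ) → Fin d → ℂ)
    (hfC1 : ContDiff ℝ 1 fun q : (Fin d → ℝ) × (Fin d → ℂ) => f q.1 q.2)
    (hLeg1 : ∀ X P, Lv X (f X P) = P)
    (hLeg2 : ∀ X V, f X (Lv X V) = V)
    (H : (Fin d → ℝ) → (Fin d → ℂ) → ℂ)
    (hH : ∀ X P, H X P = (∑ i, P i * f X P i) - L X (f X P))
    (Hx Hp : (Fin d → ℝ) → (Fin d → ℂ) → Fin d → ℂ)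
    (hHx : ∀ X P i, HasDerivAt (fun s : ℝ => H (Function.update X i s) P) (Hx X P i) (X i))
    (hHp : ∀ X P i, HasDerivAt (fun z : ℂ => H X (Function.update P i z)) (Hp X P i) (P i))
    (x : ℝ → Fin d → ℝ)
    (hxex : ∀ i : Fin d, HasRLpair a b α β fun s => ((x s i : ℝ) : ℂ))
    (hxc : ContinuousOn (fun t => DfracV a b α β μ x t) (Set.Ioo a b))
    (p : ℝ → Fin d → ℂ)
    (hp : ∀ t, p t = Lv (x t) (DfracV a b α β μ x t))
    (hpex : ∀ i : Fin d, HasRLpair a b β α fun s => p s i) :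
    (∀ t ∈ Set.Ioo a b, ∀ i : Fin d,
        Dfrac a b β α (-μ) (fun s => p s i) t = Lx (x t) (DfracV a b α β μ x t) i)
      ↔ (∀ t ∈ Set.Ioo a b, ∀ i : Fin d,
          DfracV a b α β μ x t i = Hp (x t) (p t) i ∧
          Dfrac a b β α (-μ) (fun s => p s i) t = -Hx (x t) (p t) i) := by
  have hHp_eq := Hp_eq_f (L := L) (Lx := Lx) (Lv := Lv) hLx hLv hLxC hLvC (f := f) hfC1
    hLeg1 (H := H) hH Hp hHp
  have hHx_eq := Hx_eq_negLx (L := L) (Lx := Lx) (Lv := Lv) hLx hLv hLxC hLvC (f := f) hfC1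
    hLeg1 (H := H) hH Hx hHx
  have hfp : ∀ t, f (x t) (p t) = DfracV a b α β μ x t := fun t => by
    rw [hp t, hLeg2]
  constructor
  · intro hEL t ht i
    refine ⟨?_, ?_⟩
    · rw [hHp_eq (x t) (p t) i, hfp t]
    · rw [hHx_eq (x t) (p t) i, hfp t, neg_neg]
      exact hEL t ht i
  · intro hHam t ht i
    have h2 := (hHam t ht i).2
    rw [hHx_eq (x t) (p t) i, hfp t, neg_neg] at h2
    exact h2
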